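/- Under the hypotheses of the finite-group setting (G finite, acting measure-preservingly, permuting p₁,…,p_s transitively, fixing p₀), the G-invariant region R₀ = {x : Σᵢ pᵢ(x) > k·p₀(x)} maximizes ∫_R p_j dμ for every j simultaneously, among all G-invariant measurable R with ∫_R p₀ dμ ≤ ∫_{R₀} p₀ dμ. -/

import Mathlib

open MeasureTheory

lemma np_aux {X : Type*} [MeasurableSpace X] (μ : Measure X)
    (f g : X → ℝ) (hf : Integrable f μ) (hg : Integrable g μ)
    (k : ℝ) (hk : 0 ≤ k)
    (A B : Set X) (hA : MeasurableSet A) (hB : MeasurableSet B)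
    (h1 : ∀ x ∈ A \ B, k * g x ≤ f x)
    (h2 : ∀ x ∈ B \ A, f x ≤ k * g x)
    (hlev : ∫ x in B, g x ∂μ ≤ ∫ x in A, g x ∂μ) :
    ∫ x in B, f x ∂μ ≤ ∫ x in A, f x ∂μ := by
  have eAf := integral_inter_add_diff (μ := μ) (f := f) (s := A) hB hf.integrableOn
  have eBf := integral_inter_add_diff (μ := μ) (f := f) (s := B) hA hf.integrableOn
  have eAg := integral_inter_add_diff (μ := μ) (f := g) (s := A) hB hg.integrableOn
  have eBg := integral_inter_add_diff (μ := μ) (f := g) (s := B) hA hg.integrableOn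
  rw [Set.inter_comm] at eBf eBg
  have h3 : ∫ x in B \ A, f x ∂μ ≤ k * ∫ x in B \ A, g x ∂μ := by
    rw [← integral_const_mul]
    exact setIntegral_mono_on hf.integrableOn ((hg.const_mul k).integrableOn)
      (hB.diff hA) h2
  have h4 : k * ∫ x in A \ B, g x ∂μ ≤ ∫ x in A \ B, f x ∂μ := by
    rw [← integral_const_mul]
    exact setIntegral_mono_on ((hg.const_mul k).integrableOn) hf.integrableOn
      (hA.diff hB) h1
  nlinarith [hlev]

theorem sum_lr_region_ump_invariant {X : Type*} [MeasurableSpace X] (μ : Measure X)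
    {G : Type*} [Group G] [Fintype G] (a : G → X → X)
    (ha_hom : ∀ g h x, a (g * h) x = a g (a h x)) (ha_one : ∀ x, a 1 x = x)
    (ha_meas : ∀ g, Measurable (a g))
    (ha_mp : ∀ g, MeasurePreserving (a g) μ μ)
    (s : ℕ) (p₀ : X → ℝ) (p : Fin s → X → ℝ)
    (hp₀_meas : Measurable p₀) (hp_meas : ∀ i, Measurable (p i))
    (hp₀_int : Integrable p₀ μ) (hp_int : ∀ i, Integrable (p i) μ)
    (hp₀_nonneg : ∀ x, 0 ≤ p₀ x) (hp_nonneg : ∀ i x, 0 ≤ p i x)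
    (hp₀_inv : ∀ g x, p₀ (a g⁻¹ x) = p₀ x)
    (σ : G → Equiv.Perm (Fin s))
    (hperm : ∀ g i x, p i (a g⁻¹ x) = p (σ g i) x)
    (htrans : ∀ i j : Fin s, ∃ g : G, σ g i = j)
    (k : ℝ) (hk : 0 ≤ k)
    (R₀ : Set X) (hR₀ : R₀ = {x | ∑ i, p i x > k * p₀ x})
    (R : Set X) (hR_meas : MeasurableSet R) (hR_inv : ∀ g, a g ⁻¹' R = R)
    (hlevel : ∫ x in R, p₀ x ∂μ ≤ ∫ x in R₀, p₀ x ∂μ) :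
    ∀ j : Fin s, ∫ x in R, p j x ∂μ ≤ ∫ x in R₀, p j x ∂μ := by
  intro j
  -- measurable equivalence from the action
  have ha_inv_left : ∀ (g : G) x, a g⁻¹ (a g x) = x := fun g x => by
    rw [← ha_hom, inv_mul_cancel, ha_one]
  have ha_inv_right : ∀ (g : G) x, a g (a g⁻¹ x) = x := fun g x => by
    rw [← ha_hom, mul_inv_cancel, ha_one]
  have hemb : ∀ g : G, MeasurableEmbedding (a g) := fun g =>
    (MeasurableEquiv.mk
      ⟨a g, a g⁻¹, fun x => ha_inv_left g x, fun x => ha_inv_right g x⟩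
      (ha_meas g) (ha_meas g⁻¹)).measurableEmbedding
  -- R₀ is measurable and invariant
  have hq_meas : Measurable fun x => ∑ i, p i x := Finset.measurable_sum _ fun i _ => hp_meas i
  have hR₀_meas : MeasurableSet R₀ := by
    rw [hR₀]
    exact measurableSet_lt (hp₀_meas.const_mul k) hq_meas
  have hR₀_inv : ∀ g, a g ⁻¹' R₀ = R₀ := by
    intro g
    ext x
    have hp0 : p₀ (a g x) = p₀ x := by
      have := hp₀_inv g⁻¹ x; rwa [inv_inv] at this
    have hq : ∑ i, p i (a g x) = ∑ i, p i x := by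
      have h1 : ∀ i, p i (a g x) = p (σ g⁻¹ i) x := fun i => by
        have := hperm g⁻¹ i x; rwa [inv_inv] at this
      simp_rw [h1]
      exact Equiv.sum_comp (σ g⁻¹) fun i => p i x
    simp only [hR₀, Set.mem_preimage, Set.mem_setOf_eq, hp0, hq]
  -- integrals of p i over an invariant set are all equal
  have key : ∀ (S : Set X), (∀ g, a g ⁻¹' S = S) → ∀ i i' : Fin s,
      ∫ x in S, p i x ∂μ = ∫ x in S, p i' x ∂μ := by
    intro S hS i i'
    obtain ⟨g, hg⟩ := htrans i i'
    have : ∫ x in (a g⁻¹) ⁻¹' S, p i (a g⁻¹ x) ∂μ = ∫ x in S, p i x ∂μ :=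
      (ha_mp g⁻¹).setIntegral_preimage_emb (hemb g⁻¹) _ _
    rw [hS g⁻¹] at this
    calc ∫ x in S, p i x ∂μ = ∫ x in S, p i (a g⁻¹ x) ∂μ := this.symm
      _ = ∫ x in S, p i' x ∂μ := by simp_rw [hperm g i, hg]
  -- sum of integrals
  have hsum : ∀ (S : Set X), MeasurableSet S → (∀ g, a g ⁻¹' S = S) →
      ∫ x in S, ∑ i, p i x ∂μ = (s : ℝ) * ∫ x in S, p j x ∂μ := by
    intro S hSm hS
    rw [integral_finset_sum _ fun i _ => (hp_int i).integrableOn]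
    have : ∀ i ∈ Finset.univ, ∫ x in S, p i x ∂μ = ∫ x in S, p j x ∂μ :=
      fun i _ => key S hS i j
    rw [Finset.sum_congr rfl this, Finset.sum_const, Finset.card_univ, Fintype.card_fin,
      nsmul_eq_mul]
  -- Neyman–Pearson for the sum
  have hq_int : Integrable (fun x => ∑ i, p i x) μ :=
    integrable_finset_sum _ fun i _ => hp_int i
  have hNP : ∫ x in R, ∑ i, p i x ∂μ ≤ ∫ x in R₀, ∑ i, p i x ∂μ := by
    apply np_aux μ _ p₀ hq_int hp₀_int k hk R₀ R hR₀_meas hR_meas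
    · intro x hx
      have : x ∈ R₀ := hx.1
      rw [hR₀] at this
      exact le_of_lt this
    · intro x hx
      have : x ∉ R₀ := hx.2
      rw [hR₀] at this
      simpa using not_lt.mp this
    · exact hlevel
  rw [hsum R hR_meas hR_inv, hsum R₀ hR₀_meas hR₀_inv] at hNP
  have hs : 0 < s := Fin.pos j
  have : (0:ℝ) < s := by exact_mod_cast hs
  linarith [mul_le_mul_iff_right₀ this |>.mp hNP]
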